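/- Let A be an associative unital R-algebra which is free as R-module on a basis indexed by triples (p, σ, q) with p, q ∈ M(λ), σ ∈ G(λ) for λ in a poset Λ (where each G(λ) is a group and M(λ) a finite set), satisfying the diagram-like multiplication rule: the product of basis elements C^{σ1}_{p1,q1} · C^{σ2}_{p2,q2} equals κ·C^{σ}_{p,q} where the associated index λ ≤ λ1, λ2; λ and κ depend only on (q1,p2); σ depends only on (σ1,q1,p2,σ2); p depends only on (p1,σ1,q1,p2); and if λ = λ2 then q = q2 and σσ2^{-1} depends only on (σ1,q1,p2). Then for any a ∈ A, λ ∈ Λ, p, q ∈ M(λ), σ ∈ G(λ): a·C^{σ}_{p,q} ≡ Σ_{σ',p'} r_a(p', σ'σ^{-1}, p) C^{σ'}_{p',q} modulo the span I_{<λ} of basis elements indexed by μ < λ, where the coefficients r_a(p', τ, p) ∈ R depend only on a, p', τ, p (i.e. a diagram-like algebra is naive-cellular). -/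

import Mathlib

/-- A diagram-like algebra is naive-cellular: if an associative unital `R`-algebra `A` is
free on a basis `C^σ_{p,q}` indexed by `∐_λ M(λ) × G(λ) × M(λ)` and the product of two
basis elements `C^{σ₁}_{p₁,q₁} · C^{σ₂}_{p₂,q₂}` is `κ · C^{σ}_{p,q}` where the target
index `λ ≤ λ₁, λ₂` and `κ` depend only on `(q₁,p₂)`, `σ` depends only on
`(σ₁,q₁,p₂,σ₂)`, `p` depends only on `(p₁,σ₁,q₁,p₂)`, and when `λ = λ₂` one has `q = q₂`
with `σσ₂⁻¹` depending only on `(σ₁,q₁,p₂)` — then axiom (W3) holds: there are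
coefficients `r_a(p',τ,p)` with
`a · C^σ_{p,q} ≡ ∑_{σ',p'} r_a(p',σ'σ⁻¹,p) C^{σ'}_{p',q}` modulo `I_{<λ}`. -/
theorem stmt_13 {R : Type*} [CommRing R] {A : Type*} [Ring A] [Algebra R A]
    {Λ : Type*} [PartialOrder Λ]
    (G : Λ → Type*) [∀ l, Group (G l)] [∀ l, Fintype (G l)]
    (M : Λ → Type*) [∀ l, Fintype (M l)]
    (C : ∀ l : Λ, M l → G l → M l → A)
    (b : Module.Basis (Σ l : Λ, M l × G l × M l) R A)
    (hb : ∀ i : Σ l : Λ, M l × G l × M l, b i = C i.1 i.2.1 i.2.2.1 i.2.2.2)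
    -- the data determining products of basis elements, with the dependency
    -- conditions built into their types:
    (lamF : (Σ l : Λ, M l) → (Σ l : Λ, M l) → Λ)
    (kap : (Σ l : Λ, M l) → (Σ l : Λ, M l) → R)
    (sigF : ∀ (l₁ : Λ), G l₁ → ∀ (q₁ : M l₁) (l₂ : Λ) (p₂ : M l₂),
      G l₂ → G (lamF ⟨l₁, q₁⟩ ⟨l₂, p₂⟩))
    (pF : ∀ (l₁ : Λ), M l₁ → G l₁ → ∀ (q₁ : M l₁) (l₂ : Λ) (p₂ : M l₂),
      M (lamF ⟨l₁, q₁⟩ ⟨l₂, p₂⟩))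
    (qF : ∀ (l₁ : Λ), M l₁ → G l₁ → ∀ (q₁ : M l₁) (l₂ : Λ) (p₂ : M l₂),
      G l₂ → M l₂ → M (lamF ⟨l₁, q₁⟩ ⟨l₂, p₂⟩))
    -- dependency condition (1): λ ≤ λ₁ and λ ≤ λ₂
    (hle₁ : ∀ x y, lamF x y ≤ x.1) (hle₂ : ∀ x y, lamF x y ≤ y.1)
    -- the multiplication rule
    (hmul : ∀ (l₁ : Λ) (p₁ : M l₁) (σ₁ : G l₁) (q₁ : M l₁)
      (l₂ : Λ) (p₂ : M l₂) (σ₂ : G l₂) (q₂ : M l₂),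
      C l₁ p₁ σ₁ q₁ * C l₂ p₂ σ₂ q₂ =
        kap ⟨l₁, q₁⟩ ⟨l₂, p₂⟩ •
          C (lamF ⟨l₁, q₁⟩ ⟨l₂, p₂⟩) (pF l₁ p₁ σ₁ q₁ l₂ p₂)
            (sigF l₁ σ₁ q₁ l₂ p₂ σ₂) (qF l₁ p₁ σ₁ q₁ l₂ p₂ σ₂ q₂))
    -- dependency condition (5): if λ = λ₂ then q = q₂ and σσ₂⁻¹ depends only
    -- on (σ₁, q₁, p₂)
    (hq : ∀ (l₁ : Λ) (p₁ : M l₁) (σ₁ : G l₁) (q₁ : M l₁)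
      (l₂ : Λ) (p₂ : M l₂) (σ₂ : G l₂) (q₂ : M l₂)
      (h : lamF ⟨l₁, q₁⟩ ⟨l₂, p₂⟩ = l₂),
      h ▸ qF l₁ p₁ σ₁ q₁ l₂ p₂ σ₂ q₂ = q₂)
    (hsig : ∀ (l₁ : Λ) (σ₁ : G l₁) (q₁ : M l₁)
      (l₂ : Λ) (p₂ : M l₂) (σ₂ : G l₂)
      (h : lamF ⟨l₁, q₁⟩ ⟨l₂, p₂⟩ = l₂),
      (h ▸ sigF l₁ σ₁ q₁ l₂ p₂ σ₂) * σ₂⁻¹ = h ▸ sigF l₁ σ₁ q₁ l₂ p₂ 1) :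
    -- conclusion: axiom (W3) of a naive-cellular algebra
    ∃ r : A → ∀ l : Λ, M l → G l → M l → R,
      ∀ (a : A) (l : Λ) (p q : M l) (σ : G l),
        a * C l p σ q -
          ∑ σ' : G l, ∑ p' : M l, r a l p' (σ' * σ⁻¹) p • C l p' σ' q
        ∈ Submodule.span R
            {x : A | ∃ μ : Λ, μ < l ∧ ∃ p'' σ'' q'', x = C μ p'' σ'' q''} := by

  classical
  refine ⟨fun a l p' τ p =>
    (b.repr a).sum (fun i c => c *
      (if h : lamF ⟨i.1, i.2.2.2⟩ ⟨l, p⟩ = l then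
        (if (h ▸ pF i.1 i.2.1 i.2.2.1 i.2.2.2 l p = p' ∧
             h ▸ sigF i.1 i.2.2.1 i.2.2.2 l p 1 = τ) then
          kap ⟨i.1, i.2.2.2⟩ ⟨l, p⟩ else 0) else 0)), ?_⟩
  intro a l p q σ
  set S : Submodule R A := Submodule.span R
    {x : A | ∃ μ : Λ, μ < l ∧ ∃ p'' σ'' q'', x = C μ p'' σ'' q''} with hS
  -- expand `a` in the basis
  have expand : a * C l p σ q =
      ∑ i ∈ (b.repr a).support, (b.repr a) i • (b i * C l p σ q) := by
    conv_lhs => rw [← b.linearCombination_repr a]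
    rw [Finsupp.linearCombination_apply, Finsupp.sum, Finset.sum_mul]
    exact Finset.sum_congr rfl fun i _ => smul_mul_assoc _ _ _
  -- rewrite the right-hand side as a sum over the support
  have rhs : (∑ σ' : G l, ∑ p' : M l,
      ((b.repr a).sum (fun i c => c *
        (if h : lamF ⟨i.1, i.2.2.2⟩ ⟨l, p⟩ = l then
          (if (h ▸ pF i.1 i.2.1 i.2.2.1 i.2.2.2 l p = p' ∧
               h ▸ sigF i.1 i.2.2.1 i.2.2.2 l p 1 = σ' * σ⁻¹) then
            kap ⟨i.1, i.2.2.2⟩ ⟨l, p⟩ else 0) else 0))) • C l p' σ' q)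
      = ∑ i ∈ (b.repr a).support, ∑ σ' : G l, ∑ p' : M l,
          ((b.repr a) i *
            (if h : lamF ⟨i.1, i.2.2.2⟩ ⟨l, p⟩ = l then
              (if (h ▸ pF i.1 i.2.1 i.2.2.1 i.2.2.2 l p = p' ∧
                   h ▸ sigF i.1 i.2.2.1 i.2.2.2 l p 1 = σ' * σ⁻¹) then
                kap ⟨i.1, i.2.2.2⟩ ⟨l, p⟩ else 0) else 0)) • C l p' σ' q := by
    have e1 : ∀ (σ' : G l) (p' : M l),
        ((b.repr a).sum (fun i c => c *
          (if h : lamF ⟨i.1, i.2.2.2⟩ ⟨l, p⟩ = l then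
            (if (h ▸ pF i.1 i.2.1 i.2.2.1 i.2.2.2 l p = p' ∧
                 h ▸ sigF i.1 i.2.2.1 i.2.2.2 l p 1 = σ' * σ⁻¹) then
              kap ⟨i.1, i.2.2.2⟩ ⟨l, p⟩ else 0) else 0))) • C l p' σ' q
        = ∑ i ∈ (b.repr a).support, ((b.repr a) i *
            (if h : lamF ⟨i.1, i.2.2.2⟩ ⟨l, p⟩ = l then
              (if (h ▸ pF i.1 i.2.1 i.2.2.1 i.2.2.2 l p = p' ∧
                   h ▸ sigF i.1 i.2.2.1 i.2.2.2 l p 1 = σ' * σ⁻¹) then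
                kap ⟨i.1, i.2.2.2⟩ ⟨l, p⟩ else 0) else 0)) • C l p' σ' q := by
      intro σ' p'
      rw [Finsupp.sum, Finset.sum_smul]
    simp only [e1]
    exact Eq.trans (Finset.sum_congr rfl fun σ' _ => Finset.sum_comm) Finset.sum_comm
  rw [expand, rhs, ← Finset.sum_sub_distrib]
  refine Submodule.sum_mem _ fun i _ => ?_
  obtain ⟨l₁, p₁, σ₁, q₁⟩ := i
  set c : R := (b.repr a) ⟨l₁, p₁, σ₁, q₁⟩
  rw [hb, hmul]
  by_cases h : lamF ⟨l₁, q₁⟩ ⟨l, p⟩ = l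
  · -- the top stratum: exact cancellation
    have hcc : ∀ (μ : Λ) (h : μ = l) (x : M μ) (y : G μ) (z : M μ),
        C μ x y z = C l (h ▸ x) (h ▸ y) (h ▸ z) := by
      rintro μ rfl x y z; rfl
    have h3 : h ▸ sigF l₁ σ₁ q₁ l p σ = (h ▸ sigF l₁ σ₁ q₁ l p 1) * σ := by
      rw [← hsig l₁ σ₁ q₁ l p σ h, inv_mul_cancel_right]
    have hcast : C (lamF ⟨l₁, q₁⟩ ⟨l, p⟩) (pF l₁ p₁ σ₁ q₁ l p)
        (sigF l₁ σ₁ q₁ l p σ) (qF l₁ p₁ σ₁ q₁ l p σ q)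
        = C l (h ▸ pF l₁ p₁ σ₁ q₁ l p) ((h ▸ sigF l₁ σ₁ q₁ l p 1) * σ) q := by
      rw [hcc _ h, h3, hq l₁ p₁ σ₁ q₁ l p σ q h]
    have hsum : (∑ σ' : G l, ∑ p' : M l,
        (c * (if h' : lamF ⟨l₁, q₁⟩ ⟨l, p⟩ = l then
          (if (h' ▸ pF l₁ p₁ σ₁ q₁ l p = p' ∧
               h' ▸ sigF l₁ σ₁ q₁ l p 1 = σ' * σ⁻¹) then
            kap ⟨l₁, q₁⟩ ⟨l, p⟩ else 0) else 0)) • C l p' σ' q)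
        = (c * kap ⟨l₁, q₁⟩ ⟨l, p⟩) •
            C l (h ▸ pF l₁ p₁ σ₁ q₁ l p) ((h ▸ sigF l₁ σ₁ q₁ l p 1) * σ) q := by
      have step : ∀ (σ' : G l) (p' : M l),
          (c * (if h' : lamF ⟨l₁, q₁⟩ ⟨l, p⟩ = l then
            (if (h' ▸ pF l₁ p₁ σ₁ q₁ l p = p' ∧
                 h' ▸ sigF l₁ σ₁ q₁ l p 1 = σ' * σ⁻¹) then
              kap ⟨l₁, q₁⟩ ⟨l, p⟩ else 0) else 0)) • C l p' σ' q
          = if σ' = (h ▸ sigF l₁ σ₁ q₁ l p 1) * σ then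
              (if p' = h ▸ pF l₁ p₁ σ₁ q₁ l p then
                (c * kap ⟨l₁, q₁⟩ ⟨l, p⟩) • C l p' σ' q else 0) else 0 := by
        intro σ' p'
        rw [dif_pos h]
        by_cases h1 : σ' = (h ▸ sigF l₁ σ₁ q₁ l p 1) * σ
        · by_cases h2 : p' = h ▸ pF l₁ p₁ σ₁ q₁ l p
          · have hT : h ▸ sigF l₁ σ₁ q₁ l p 1 = σ' * σ⁻¹ := by
              rw [h1, mul_inv_cancel_right]
            rw [if_pos ⟨h2.symm, hT⟩, if_pos h1, if_pos h2]
          · rw [if_neg (fun hc => h2 hc.1.symm), if_pos h1, if_neg h2,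
              mul_zero, zero_smul]
        · have hne : ¬ (h ▸ pF l₁ p₁ σ₁ q₁ l p = p' ∧
              h ▸ sigF l₁ σ₁ q₁ l p 1 = σ' * σ⁻¹) := fun hc =>
            h1 (by rw [hc.2, inv_mul_cancel_right])
          rw [if_neg hne, if_neg h1, mul_zero, zero_smul]
      simp only [step]
      rw [Fintype.sum_eq_single ((h ▸ sigF l₁ σ₁ q₁ l p 1) * σ)
          (fun x hx => by simp [if_neg hx]),
        Fintype.sum_eq_single (h ▸ pF l₁ p₁ σ₁ q₁ l p)
          (fun x hx => by simp [if_neg hx])]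
      simp
    rw [hsum, smul_smul, hcast, sub_self]
    exact Submodule.zero_mem _
  · -- lower stratum: the product lies in `I_{<l}` and the coefficients vanish
    have hlt : lamF ⟨l₁, q₁⟩ ⟨l, p⟩ < l :=
      lt_of_le_of_ne (hle₂ ⟨l₁, q₁⟩ ⟨l, p⟩) h
    have hz : (∑ σ' : G l, ∑ p' : M l,
        (c * (if h' : lamF ⟨l₁, q₁⟩ ⟨l, p⟩ = l then
          (if (h' ▸ pF l₁ p₁ σ₁ q₁ l p = p' ∧
               h' ▸ sigF l₁ σ₁ q₁ l p 1 = σ' * σ⁻¹) then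
            kap ⟨l₁, q₁⟩ ⟨l, p⟩ else 0) else 0)) • C l p' σ' q) = 0 := by
      simp [dif_neg h]
    rw [hz, sub_zero, smul_smul]
    exact Submodule.smul_mem _ _ (Submodule.subset_span
      ⟨lamF ⟨l₁, q₁⟩ ⟨l, p⟩, hlt, _, _, _, rfl⟩)
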